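/- Every morphism f : n → m in the Temperley-Lieb diagram category D factors as f = m' ∘ e where e : n → k is epic (has no caps) and m' : k → m is monic (has no cups); here if f has p cups and q caps then k = n − 2p = m − 2q. -/

import Mathlib

open Sum Relation

/-- A fixed-point free involution. -/
def FPF {X : Type*} (f : X → X) : Prop :=
  Function.Involutive f ∧ ∀ x, f x ≠ x

/-- Condition (PL1) for `f` with respect to the order on `X`:
if `i < j < f i` then `i < f j < f i`. -/
def PL1 {X : Type*} [Preorder X] (f : X → X) : Prop :=
  ∀ i j, i < j → j < f i → i < f j ∧ f j < f i

/-- Incomparability `x # y`. -/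
def Incomp {X : Type*} [Preorder X] (x y : X) : Prop :=
  ¬ (x ≤ y) ∧ ¬ (y ≤ x)

/-- Condition (PL2): if `f i # i`, `i < j` and `j # f j` then `f i < f j`. -/
def PL2 {X : Type*} [Preorder X] (f : X → X) : Prop :=
  ∀ i j, Incomp (f i) i → i < j → Incomp j (f j) → f i < f j

/-- A planar involution on `[n] ⊕ [m]` (with the disjoint-sum partial order):
a fixed-point free involution satisfying (PL1) and (PL2).  These are the
elements of `P(n, m)`. -/
def Planar {n m : ℕ} (f : Fin n ⊕ Fin m → Fin n ⊕ Fin m) : Prop :=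
  FPF f ∧ PL1 f ∧ PL2 f

/-- The graph relation of a function. -/
def graphRel {X : Type*} (f : X → X) : X → X → Prop := fun x y => f x = y

/-- The execution formula: the Geometry-of-Interaction composite of a relation
`R` on `A ⊕ B` and a relation `S` on `B ⊕ C`, defined componentwise by
`θ_{A,A} = R_{A,A} ∪ R_{A,B};S_{B,B};(R_{B,B};S_{B,B})*;R_{B,A}`,
`θ_{A,C} = R_{A,B};(S_{B,B};R_{B,B})*;S_{B,C}`,
`θ_{C,A} = S_{C,B};(R_{B,B};S_{B,B})*;R_{B,A}`,
`θ_{C,C} = S_{C,C} ∪ S_{C,B};R_{B,B};(S_{B,B};R_{B,B})*;S_{B,C}`. -/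
def ExecR {A B C : Type*} (R : A ⊕ B → A ⊕ B → Prop) (S : B ⊕ C → B ⊕ C → Prop) :
    A ⊕ C → A ⊕ C → Prop :=
  let Raa : A → A → Prop := fun i j => R (Sum.inl i) (Sum.inl j)
  let Rab : A → B → Prop := fun i j => R (Sum.inl i) (Sum.inr j)
  let Rba : B → A → Prop := fun i j => R (Sum.inr i) (Sum.inl j)
  let Rbb : B → B → Prop := fun i j => R (Sum.inr i) (Sum.inr j)
  let Sbb : B → B → Prop := fun i j => S (Sum.inl i) (Sum.inl j)
  let Sbc : B → C → Prop := fun i j => S (Sum.inl i) (Sum.inr j)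
  let Scb : C → B → Prop := fun i j => S (Sum.inr i) (Sum.inl j)
  let Scc : C → C → Prop := fun i j => S (Sum.inr i) (Sum.inr j)
  fun x y =>
    match x, y with
    | Sum.inl i, Sum.inl j =>
        Raa i j ∨
          Relation.Comp Rab
            (Relation.Comp Sbb
              (Relation.Comp (Relation.ReflTransGen (Relation.Comp Rbb Sbb)) Rba)) i j
    | Sum.inl i, Sum.inr j =>
        Relation.Comp Rab
          (Relation.Comp (Relation.ReflTransGen (Relation.Comp Sbb Rbb)) Sbc) i j
    | Sum.inr i, Sum.inl j =>
        Relation.Comp Scb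
          (Relation.Comp (Relation.ReflTransGen (Relation.Comp Rbb Sbb)) Rba) i j
    | Sum.inr i, Sum.inr j =>
        Scc i j ∨
          Relation.Comp Scb
            (Relation.Comp Rbb
              (Relation.Comp (Relation.ReflTransGen (Relation.Comp Sbb Rbb)) Sbc)) i j

/-- The execution-formula composite of two involutions, as a function: for
planar involutions the execution relation is the graph of a function, and
`execFun f g` is that function. -/
noncomputable def execFun {n m p : ℕ} (f : Fin n ⊕ Fin m → Fin n ⊕ Fin m)
    (g : Fin m ⊕ Fin p → Fin m ⊕ Fin p) : Fin n ⊕ Fin p → Fin n ⊕ Fin p :=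
  fun x =>
    @dite _ (∃ y, ExecR (graphRel f) (graphRel g) x y) (Classical.propDecidable _)
      (fun h => h.choose) (fun _ => x)

/-- The partial bijection `Cyc(f,g) = f_{m,m} ; g_{m,m}` on `[m]`:
relational composition of the caps of `f` with the cups of `g`. -/
def Cyc {n m p : ℕ} (f : Fin n ⊕ Fin m → Fin n ⊕ Fin m)
    (g : Fin m ⊕ Fin p → Fin m ⊕ Fin p) : Fin m → Fin m → Prop :=
  Relation.Comp (fun i j => f (Sum.inr i) = Sum.inr j)
    (fun i j => g (Sum.inl i) = Sum.inl j)

/-- Iterated relational composition `r^k` (with `r^0` the identity). -/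
def relPow {α : Type*} (r : α → α → Prop) : ℕ → α → α → Prop
  | 0 => Eq
  | k + 1 => Relation.Comp r (relPow r k)

/-- `i` is a cyclic element of `r`: `r^k i i` for some `k > 0`. -/
def Cyclic {α : Type*} (r : α → α → Prop) (i : α) : Prop :=
  ∃ k, 0 < k ∧ relPow r k i i

/-- The cycle (orbit) of `i` under `r`. -/
def cycleOf {α : Type*} (r : α → α → Prop) (i : α) : Set α :=
  {j | ∃ k, relPow r k i j}

/-- `Z(f,g)`: the number of distinct cycles of `Cyc(f,g)`. -/
noncomputable def Z {n m p : ℕ} (f : Fin n ⊕ Fin m → Fin n ⊕ Fin m)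
    (g : Fin m ⊕ Fin p → Fin m ⊕ Fin p) : ℕ :=
  {S : Set (Fin m) | ∃ i, Cyclic (Cyc f g) i ∧ S = cycleOf (Cyc f g) i}.ncard

/-- A morphism `n → m` of the Temperley-Lieb category: a loop count together
with a function on `[n] ⊕ [m]` (required to be a planar involution for
genuine morphisms). -/
def TLHom (n m : ℕ) : Type :=
  ℕ × (Fin n ⊕ Fin m → Fin n ⊕ Fin m)

/-- Composition in the Temperley-Lieb category:
`(t, g) ∘ (s, f) = (s + t + Z(f,g), f;g)`. -/
noncomputable def TLcomp {n m p : ℕ} (F : TLHom n m) (G : TLHom m p) : TLHom n p :=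
  (F.1 + G.1 + Z F.2 G.2, execFun F.2 G.2)

/-- The identity morphism: zero loops and the twist involution `i ↔ i'`. -/
def tlid (n : ℕ) : TLHom n n :=
  (0, Sum.swap)

/-- `f` has a cup: two top-row elements are paired with each other. -/
def HasCup {n m : ℕ} (f : Fin n ⊕ Fin m → Fin n ⊕ Fin m) : Prop :=
  ∃ i j : Fin n, f (Sum.inl i) = Sum.inl j

/-- `f` has a cap: two bottom-row elements are paired with each other. -/
def HasCap {n m : ℕ} (f : Fin n ⊕ Fin m → Fin n ⊕ Fin m) : Prop :=
  ∃ i j : Fin m, f (Sum.inr i) = Sum.inr j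

/-- `F : n → m` is monic in the diagram category `D`: left-cancellable with
respect to all morphisms of `D` (pairs of a loop count and a planar
involution). -/
def Monic {n m : ℕ} (F : TLHom n m) : Prop :=
  ∀ (p : ℕ) (G H : TLHom p n), Planar G.2 → Planar H.2 →
    TLcomp G F = TLcomp H F → G = H

/-- `F : n → m` is epic in the diagram category `D`: right-cancellable with
respect to all morphisms of `D`. -/
def Epic {n m : ℕ} (F : TLHom n m) : Prop :=
  ∀ (p : ℕ) (G H : TLHom m p), Planar G.2 → Planar H.2 →
    TLcomp F G = TLcomp F H → G = H

/-- The number of cups of `f` (pairs of matched top-row elements). -/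
noncomputable def numCups {n m : ℕ} (f : Fin n ⊕ Fin m → Fin n ⊕ Fin m) : ℕ :=
  {i : Fin n | ∃ j, i < j ∧ f (Sum.inl i) = Sum.inl j}.ncard

/-- The number of caps of `f` (pairs of matched bottom-row elements). -/
noncomputable def numCaps {n m : ℕ} (f : Fin n ⊕ Fin m → Fin n ⊕ Fin m) : ℕ :=
  {i : Fin m | ∃ j, i < j ∧ f (Sum.inr i) = Sum.inr j}.ncard

namespace TLAux

open Sum Relation

lemma rtg_empty {α : Type*} {r : α → α → Prop} (h : ∀ a b, ¬ r a b) {a b : α}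
    (hab : Relation.ReflTransGen r a b) : a = b := by
  induction hab with
  | refl => rfl
  | tail _ hr _ => exact absurd hr (h _ _)

section Unfold

variable {A B C : Type*} (R : A ⊕ B → A ⊕ B → Prop) (S : B ⊕ C → B ⊕ C → Prop)

lemma execR_ll (i j : A) : ExecR R S (Sum.inl i) (Sum.inl j) ↔
    (R (Sum.inl i) (Sum.inl j) ∨
      Relation.Comp (fun a b => R (Sum.inl a) (Sum.inr b))
        (Relation.Comp (fun a b => S (Sum.inl a) (Sum.inl b))
          (Relation.Comp
            (Relation.ReflTransGen (Relation.Comp (fun a b => R (Sum.inr a) (Sum.inr b))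
              (fun a b => S (Sum.inl a) (Sum.inl b))))
            (fun a b => R (Sum.inr a) (Sum.inl b)))) i j) := Iff.rfl

lemma execR_lr (i : A) (j : C) : ExecR R S (Sum.inl i) (Sum.inr j) ↔
    Relation.Comp (fun a b => R (Sum.inl a) (Sum.inr b))
      (Relation.Comp
        (Relation.ReflTransGen (Relation.Comp (fun a b => S (Sum.inl a) (Sum.inl b))
          (fun a b => R (Sum.inr a) (Sum.inr b))))
        (fun a b => S (Sum.inl a) (Sum.inr b))) i j := Iff.rfl

lemma execR_rl (i : C) (j : A) : ExecR R S (Sum.inr i) (Sum.inl j) ↔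
    Relation.Comp (fun a b => S (Sum.inr a) (Sum.inl b))
      (Relation.Comp
        (Relation.ReflTransGen (Relation.Comp (fun a b => R (Sum.inr a) (Sum.inr b))
          (fun a b => S (Sum.inl a) (Sum.inl b))))
        (fun a b => R (Sum.inr a) (Sum.inl b))) i j := Iff.rfl

lemma execR_rr (i j : C) : ExecR R S (Sum.inr i) (Sum.inr j) ↔
    (S (Sum.inr i) (Sum.inr j) ∨
      Relation.Comp (fun a b => S (Sum.inr a) (Sum.inl b))
        (Relation.Comp (fun a b => R (Sum.inr a) (Sum.inr b))
          (Relation.Comp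
            (Relation.ReflTransGen (Relation.Comp (fun a b => S (Sum.inl a) (Sum.inl b))
              (fun a b => R (Sum.inr a) (Sum.inr b))))
            (fun a b => S (Sum.inl a) (Sum.inr b)))) i j) := Iff.rfl

end Unfold

lemma Z_eq_zero {n m p : ℕ} {f : Fin n ⊕ Fin m → Fin n ⊕ Fin m}
    {g : Fin m ⊕ Fin p → Fin m ⊕ Fin p}
    (h : ∀ i j : Fin m, ¬ Cyc f g i j) : Z f g = 0 := by
  have hset : {S : Set (Fin m) | ∃ i, Cyclic (Cyc f g) i ∧ S = cycleOf (Cyc f g) i} = ∅ := by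
    ext S
    simp only [Set.mem_setOf_eq, Set.mem_empty_iff_false, iff_false, not_exists]
    rintro i ⟨⟨k, hk, hp⟩, -⟩
    cases k with
    | zero => exact absurd hk (lt_irrefl _)
    | succ k =>
      obtain ⟨x, hx, -⟩ := hp
      exact h _ _ hx
  rw [Z, hset, Set.ncard_empty]

lemma execFun_eq_of_spec {n m p : ℕ} {f : Fin n ⊕ Fin m → Fin n ⊕ Fin m}
    {g : Fin m ⊕ Fin p → Fin m ⊕ Fin p} {x y : Fin n ⊕ Fin p}
    (hspec : ∀ z, ExecR (graphRel f) (graphRel g) x z ↔ z = y) :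
    execFun f g x = y := by
  have hex : ∃ z, ExecR (graphRel f) (graphRel g) x z := ⟨y, (hspec y).mpr rfl⟩
  unfold execFun
  rw [dif_pos hex]
  exact (hspec _).mp hex.choose_spec

end TLAux
namespace TLAux

open Sum Relation

section NoCap

variable {n k p : ℕ} {e : Fin n ⊕ Fin k → Fin n ⊕ Fin k}
variable {σ : Fin k → Fin n}

lemma exec_nocap_spec (hσ : ∀ b, e (Sum.inr b) = Sum.inl (σ b))
    (heσ : ∀ b, e (Sum.inl (σ b)) = Sum.inr b)
    (g : Fin k ⊕ Fin p → Fin k ⊕ Fin p) :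
    ∀ (x : Fin k ⊕ Fin p) (y : Fin n ⊕ Fin p),
      ExecR (graphRel e) (graphRel g) (Sum.elim (fun b => Sum.inl (σ b)) Sum.inr x) y ↔
        y = Sum.map σ id (g x) := by
  have hRbb : ∀ a b : Fin k, ¬ graphRel e (Sum.inr a) (Sum.inr b) := by
    intro a b hab
    rw [graphRel, hσ a] at hab
    exact absurd hab (by simp)
  have hRS : ∀ (q : Fin k → Fin k → Prop) (a b : Fin k),
      ¬ Relation.Comp (fun a b => graphRel e (Sum.inr a) (Sum.inr b)) q a b := by
    rintro q a b ⟨c, hc, -⟩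
    exact hRbb a c hc
  have hSR : ∀ (q : Fin k → Fin k → Prop) (a b : Fin k),
      ¬ Relation.Comp q (fun a b => graphRel e (Sum.inr a) (Sum.inr b)) a b := by
    rintro q a b ⟨c, -, hc⟩
    exact hRbb c b hc
  rintro (b | c) y
  · -- input point is inl (σ b)
    simp only [Sum.elim_inl]
    rcases hv : g (Sum.inl b) with b' | c'
    · simp only [Sum.map_inl, id]
      cases y with
      | inl j =>
        rw [execR_ll]
        constructor
        · rintro (hj | ⟨b₀, hb₀, x₀, hx₀, z, hz, hzj⟩)
          · rw [graphRel, heσ b] at hj; exact absurd hj (by simp)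
          · rw [graphRel, heσ b] at hb₀
            obtain rfl : b = b₀ := by simpa using hb₀
            rw [graphRel, hv] at hx₀
            obtain rfl : b' = x₀ := by simpa using hx₀
            obtain rfl : b' = z := rtg_empty (hRS _) hz
            rw [graphRel, hσ] at hzj
            obtain rfl : σ b' = j := by simpa using hzj
            rfl
        · intro h
          obtain rfl : j = σ b' := by simpa using h
          exact Or.inr ⟨b, heσ b, b', hv, b', Relation.ReflTransGen.refl, hσ b'⟩
      | inr c =>
        rw [execR_lr]
        constructor
        · rintro ⟨b₀, hb₀, z, hz, hzc⟩
          rw [graphRel, heσ b] at hb₀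
          obtain rfl : b = b₀ := by simpa using hb₀
          obtain rfl : b = z := rtg_empty (hSR _) hz
          rw [graphRel, hv] at hzc
          simp at hzc
        · intro h; exact absurd h (by simp)
    · simp only [Sum.map_inr, id]
      cases y with
      | inl j =>
        rw [execR_ll]
        constructor
        · rintro (hj | ⟨b₀, hb₀, x₀, hx₀, -⟩)
          · rw [graphRel, heσ b] at hj; exact absurd hj (by simp)
          · rw [graphRel, heσ b] at hb₀
            obtain rfl : b = b₀ := by simpa using hb₀
            rw [graphRel, hv] at hx₀
            simp at hx₀
        · intro h; exact absurd h (by simp)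
      | inr c =>
        rw [execR_lr]
        constructor
        · rintro ⟨b₀, hb₀, z, hz, hzc⟩
          rw [graphRel, heσ b] at hb₀
          obtain rfl : b = b₀ := by simpa using hb₀
          obtain rfl : b = z := rtg_empty (hSR _) hz
          rw [graphRel, hv] at hzc
          obtain rfl : c' = c := by simpa using hzc
          rfl
        · intro h
          obtain rfl : c = c' := by simpa using h
          exact ⟨b, heσ b, b, Relation.ReflTransGen.refl, hv⟩
  · -- input point is inr c
    simp only [Sum.elim_inr]
    rcases hv : g (Sum.inr c) with b' | c'
    · simp only [Sum.map_inl, id]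
      cases y with
      | inl j =>
        rw [execR_rl]
        constructor
        · rintro ⟨b₀, hb₀, z, hz, hzj⟩
          rw [graphRel, hv] at hb₀
          obtain rfl : b' = b₀ := by simpa using hb₀
          obtain rfl : b' = z := rtg_empty (hRS _) hz
          rw [graphRel, hσ] at hzj
          obtain rfl : σ b' = j := by simpa using hzj
          rfl
        · intro h
          obtain rfl : j = σ b' := by simpa using h
          exact ⟨b', hv, b', Relation.ReflTransGen.refl, hσ b'⟩
      | inr d =>
        rw [execR_rr]
        constructor
        · rintro (hd | ⟨b₀, hb₀, x₀, hx₀, -⟩)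
          · rw [graphRel, hv] at hd; simp at hd
          · rw [graphRel, hv] at hb₀
            obtain rfl : b' = b₀ := by simpa using hb₀
            exact absurd hx₀ (hRbb _ _)
        · intro h; exact absurd h (by simp)
    · simp only [Sum.map_inr, id]
      cases y with
      | inl j =>
        rw [execR_rl]
        constructor
        · rintro ⟨b₀, hb₀, -⟩
          rw [graphRel, hv] at hb₀
          simp at hb₀
        · intro h; exact absurd h (by simp)
      | inr d =>
        rw [execR_rr]
        constructor
        · rintro (hd | ⟨b₀, hb₀, -⟩)
          · rw [graphRel, hv] at hd
            obtain rfl : c' = d := by simpa using hd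
            rfl
          · rw [graphRel, hv] at hb₀
            simp at hb₀
        · intro h
          obtain rfl : d = c' := by simpa using h
          exact Or.inl hv

end NoCap

end TLAux
namespace TLAux

open Sum Relation

lemma sum_map_inj {α β γ δ : Type*} {f : α → β} {g : γ → δ}
    (hf : Function.Injective f) (hg : Function.Injective g) :
    Function.Injective (Sum.map f g) := by
  rintro (a | a) (b | b) h <;> simp only [Sum.map_inl, Sum.map_inr] at h
  · exact congrArg Sum.inl (hf (by simpa using h))
  · simp at h
  · simp at h
  · exact congrArg Sum.inr (hg (by simpa using h))

lemma epic_of_nocap {n k : ℕ} (L : ℕ) (e : Fin n ⊕ Fin k → Fin n ⊕ Fin k)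
    (he : Function.Involutive e) (hcap : ¬ HasCap e) :
    Epic (L, e) := by
  intro p G H _ _ hcomp
  have hσex : ∀ b : Fin k, ∃ a, e (Sum.inr b) = Sum.inl a := by
    intro b
    rcases hx : e (Sum.inr b) with a | a
    · exact ⟨a, rfl⟩
    · exact absurd ⟨b, a, hx⟩ hcap
  choose σ hσ using hσex
  have heσ : ∀ b, e (Sum.inl (σ b)) = Sum.inr b := fun b => by
    rw [← hσ b, he]
  have hσinj : Function.Injective σ := by
    intro a b hab
    have : e (Sum.inr a) = e (Sum.inr b) := by rw [hσ a, hσ b, hab]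
    simpa using he.injective this
  have hZG : Z e G.2 = 0 := by
    apply Z_eq_zero
    rintro i j ⟨x, hx, -⟩
    rw [hσ i] at hx
    simp at hx
  have hZH : Z e H.2 = 0 := by
    apply Z_eq_zero
    rintro i j ⟨x, hx, -⟩
    rw [hσ i] at hx
    simp at hx
  have h1 : G.1 = H.1 := by
    have := congrArg Prod.fst hcomp
    simp only [TLcomp, hZG, hZH] at this
    omega
  have h2 : G.2 = H.2 := by
    have hsnd := congrArg Prod.snd hcomp
    simp only [TLcomp] at hsnd
    funext x
    have hGx : execFun e G.2 (Sum.elim (fun b => Sum.inl (σ b)) Sum.inr x)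
        = Sum.map σ id (G.2 x) :=
      execFun_eq_of_spec (fun z => exec_nocap_spec hσ heσ G.2 x z)
    have hHx : execFun e H.2 (Sum.elim (fun b => Sum.inl (σ b)) Sum.inr x)
        = Sum.map σ id (H.2 x) :=
      execFun_eq_of_spec (fun z => exec_nocap_spec hσ heσ H.2 x z)
    have : Sum.map σ id (G.2 x) = Sum.map σ id (H.2 x) := by
      rw [← hGx, ← hHx, hsnd]
    exact sum_map_inj hσinj (fun a b h => h) this
  exact Prod.ext h1 h2

end TLAux
namespace TLAux

open Sum Relation

section NoCup

variable {p k m : ℕ} {v : Fin k ⊕ Fin m → Fin k ⊕ Fin m}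
variable {τ : Fin k → Fin m}

lemma exec_nocup_spec (hτ : ∀ b, v (Sum.inl b) = Sum.inr (τ b))
    (hvτ : ∀ b, v (Sum.inr (τ b)) = Sum.inl b)
    (u : Fin p ⊕ Fin k → Fin p ⊕ Fin k) :
    ∀ (x : Fin p ⊕ Fin k) (y : Fin p ⊕ Fin m),
      ExecR (graphRel u) (graphRel v) (Sum.elim Sum.inl (fun b => Sum.inr (τ b)) x) y ↔
        y = Sum.map id τ (u x) := by
  have hSbb : ∀ a b : Fin k, ¬ graphRel v (Sum.inl a) (Sum.inl b) := by
    intro a b hab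
    rw [graphRel, hτ a] at hab
    exact absurd hab (by simp)
  have hRS : ∀ (q : Fin k → Fin k → Prop) (a b : Fin k),
      ¬ Relation.Comp q (fun a b => graphRel v (Sum.inl a) (Sum.inl b)) a b := by
    rintro q a b ⟨c, -, hc⟩
    exact hSbb c b hc
  have hSR : ∀ (q : Fin k → Fin k → Prop) (a b : Fin k),
      ¬ Relation.Comp (fun a b => graphRel v (Sum.inl a) (Sum.inl b)) q a b := by
    rintro q a b ⟨c, hc, -⟩
    exact hSbb a c hc
  rintro (i | b) y
  · -- input point is inl i
    simp only [Sum.elim_inl]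
    rcases hv : u (Sum.inl i) with i' | b'
    · simp only [Sum.map_inl, id]
      cases y with
      | inl j =>
        rw [execR_ll]
        constructor
        · rintro (hj | ⟨b₀, hb₀, x₀, hx₀, -⟩)
          · rw [graphRel, hv] at hj
            obtain rfl : i' = j := by simpa using hj
            rfl
          · exact absurd hx₀ (hSbb _ _)
        · intro h
          obtain rfl : j = i' := by simpa using h
          exact Or.inl hv
      | inr c =>
        rw [execR_lr]
        constructor
        · rintro ⟨b₀, hb₀, z, hz, hzc⟩
          rw [graphRel, hv] at hb₀
          simp at hb₀
        · intro h; exact absurd h (by simp)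
    · simp only [Sum.map_inr, id]
      cases y with
      | inl j =>
        rw [execR_ll]
        constructor
        · rintro (hj | ⟨b₀, hb₀, x₀, hx₀, -⟩)
          · rw [graphRel, hv] at hj; simp at hj
          · exact absurd hx₀ (hSbb _ _)
        · intro h; exact absurd h (by simp)
      | inr c =>
        rw [execR_lr]
        constructor
        · rintro ⟨b₀, hb₀, z, hz, hzc⟩
          rw [graphRel, hv] at hb₀
          obtain rfl : b' = b₀ := by simpa using hb₀
          obtain rfl : b' = z := rtg_empty (hSR _) hz
          rw [graphRel, hτ] at hzc
          obtain rfl : τ b' = c := by simpa using hzc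
          rfl
        · intro h
          obtain rfl : c = τ b' := by simpa using h
          exact ⟨b', hv, b', Relation.ReflTransGen.refl, hτ b'⟩
  · -- input point is inr (τ b)
    simp only [Sum.elim_inr]
    rcases hv : u (Sum.inr b) with i' | b'
    · simp only [Sum.map_inl, id]
      cases y with
      | inl j =>
        rw [execR_rl]
        constructor
        · rintro ⟨b₀, hb₀, z, hz, hzj⟩
          rw [graphRel, hvτ b] at hb₀
          obtain rfl : b = b₀ := by simpa using hb₀
          obtain rfl : b = z := rtg_empty (hRS _) hz
          rw [graphRel, hv] at hzj
          obtain rfl : i' = j := by simpa using hzj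
          rfl
        · intro h
          obtain rfl : j = i' := by simpa using h
          exact ⟨b, hvτ b, b, Relation.ReflTransGen.refl, hv⟩
      | inr d =>
        rw [execR_rr]
        constructor
        · rintro (hd | ⟨b₀, hb₀, x₀, hx₀, -⟩)
          · rw [graphRel, hvτ b] at hd; simp at hd
          · rw [graphRel, hvτ b] at hb₀
            obtain rfl : b = b₀ := by simpa using hb₀
            rw [graphRel, hv] at hx₀
            simp at hx₀
        · intro h; exact absurd h (by simp)
    · simp only [Sum.map_inr, id]
      cases y with
      | inl j =>
        rw [execR_rl]
        constructor
        · rintro ⟨b₀, hb₀, z, hz, hzj⟩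
          rw [graphRel, hvτ b] at hb₀
          obtain rfl : b = b₀ := by simpa using hb₀
          obtain rfl : b = z := rtg_empty (hRS _) hz
          rw [graphRel, hv] at hzj
          simp at hzj
        · intro h; exact absurd h (by simp)
      | inr d =>
        rw [execR_rr]
        constructor
        · rintro (hd | ⟨b₀, hb₀, x₀, hx₀, z, hz, hzd⟩)
          · rw [graphRel, hvτ b] at hd; simp at hd
          · rw [graphRel, hvτ b] at hb₀
            obtain rfl : b = b₀ := by simpa using hb₀
            rw [graphRel, hv] at hx₀
            obtain rfl : b' = x₀ := by simpa using hx₀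
            obtain rfl : b' = z := rtg_empty (hSR _) hz
            rw [graphRel, hτ] at hzd
            obtain rfl : τ b' = d := by simpa using hzd
            rfl
        · intro h
          obtain rfl : d = τ b' := by simpa using h
          exact Or.inr ⟨b, hvτ b, b', hv, b', Relation.ReflTransGen.refl, hτ b'⟩

end NoCup

lemma monic_of_nocup {k m : ℕ} (L : ℕ) (v : Fin k ⊕ Fin m → Fin k ⊕ Fin m)
    (hv : Function.Involutive v) (hcup : ¬ HasCup v) :
    Monic (L, v) := by
  intro p G H _ _ hcomp
  have hτex : ∀ b : Fin k, ∃ c, v (Sum.inl b) = Sum.inr c := by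
    intro b
    rcases hx : v (Sum.inl b) with a | a
    · exact absurd ⟨b, a, hx⟩ hcup
    · exact ⟨a, rfl⟩
  choose τ hτ using hτex
  have hvτ : ∀ b, v (Sum.inr (τ b)) = Sum.inl b := fun b => by
    rw [← hτ b, hv]
  have hτinj : Function.Injective τ := by
    intro a b hab
    have : v (Sum.inl a) = v (Sum.inl b) := by rw [hτ a, hτ b, hab]
    simpa using hv.injective this
  have hZ : ∀ u : Fin p ⊕ Fin k → Fin p ⊕ Fin k, Z u v = 0 := by
    intro u
    apply Z_eq_zero
    rintro i j ⟨x, -, hx⟩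
    rw [hτ x] at hx
    simp at hx
  have h1 : G.1 = H.1 := by
    have := congrArg Prod.fst hcomp
    simp only [TLcomp, hZ] at this
    omega
  have h2 : G.2 = H.2 := by
    have hsnd := congrArg Prod.snd hcomp
    simp only [TLcomp] at hsnd
    funext x
    have hGx : execFun G.2 v (Sum.elim Sum.inl (fun b => Sum.inr (τ b)) x)
        = Sum.map id τ (G.2 x) :=
      execFun_eq_of_spec (fun z => exec_nocup_spec hτ hvτ G.2 x z)
    have hHx : execFun H.2 v (Sum.elim Sum.inl (fun b => Sum.inr (τ b)) x)
        = Sum.map id τ (H.2 x) :=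
      execFun_eq_of_spec (fun z => exec_nocup_spec hτ hvτ H.2 x z)
    have : Sum.map id τ (G.2 x) = Sum.map id τ (H.2 x) := by
      rw [← hGx, ← hHx, hsnd]
    exact sum_map_inj (fun a b h => h) hτinj this
  exact Prod.ext h1 h2

end TLAux
namespace TLAux

open Sum Relation

section Construction

variable {n m : ℕ} (f : Fin n ⊕ Fin m → Fin n ⊕ Fin m)

/-- Top-row through strands. -/
def topT : Finset (Fin n) := Finset.univ.filter fun i => (f (Sum.inl i)).isRight

/-- Bottom-row through strands. -/
def botT : Finset (Fin m) := Finset.univ.filter fun j => (f (Sum.inr j)).isLeft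

lemma mem_topT {i : Fin n} : i ∈ topT f ↔ ∃ j, f (Sum.inl i) = Sum.inr j := by
  simp [topT, Sum.isRight_iff]

lemma mem_botT {j : Fin m} : j ∈ botT f ↔ ∃ i, f (Sum.inr j) = Sum.inl i := by
  simp [botT, Sum.isLeft_iff]

lemma not_mem_topT {i : Fin n} : i ∉ topT f ↔ ∃ j, f (Sum.inl i) = Sum.inl j := by
  rw [mem_topT]
  rcases hx : f (Sum.inl i) with a | a <;> simp

lemma not_mem_botT {j : Fin m} : j ∉ botT f ↔ ∃ i, f (Sum.inr j) = Sum.inr i := by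
  rw [mem_botT]
  rcases hx : f (Sum.inr j) with a | a <;> simp

variable {f}

lemma card_botT (hinv : Function.Involutive f) : (botT f).card = (topT f).card := by
  apply Finset.card_bij (fun j hj => (f (Sum.inr j)).getLeft
    (by rw [Sum.isLeft_iff]; exact (mem_botT f).mp hj))
  · intro a ha
    rw [mem_topT]
    refine ⟨a, ?_⟩
    rw [Sum.inl_getLeft, hinv]
  · intro a ha b hb hab
    have : f (Sum.inr a) = f (Sum.inr b) := by
      rw [← Sum.inl_getLeft (f (Sum.inr a)), ← Sum.inl_getLeft (f (Sum.inr b)), hab]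
      exact Sum.isLeft_iff.mpr ((mem_botT f).mp ha)
    simpa using hinv.injective this
  · intro b hb
    obtain ⟨c, hc⟩ := (mem_topT f).mp hb
    have hcb : f (Sum.inr c) = Sum.inl b := by rw [← hc, hinv]
    refine ⟨c, (mem_botT f).mpr ⟨b, hcb⟩, ?_⟩
    simp [hcb]

variable (f)

/-- The number of through strands. -/
def kk : ℕ := (topT f).card

/-- Enumeration of top through strands. -/
noncomputable def sigE : Fin (kk f) ↪o Fin n := (topT f).orderEmbOfFin rfl

lemma sigE_mem (r : Fin (kk f)) : sigE f r ∈ topT f :=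
  Finset.orderEmbOfFin_mem _ _ _

/-- Rank of a top through strand. -/
noncomputable def rkE (i : Fin n) (h : i ∈ topT f) : Fin (kk f) :=
  ((topT f).orderIsoOfFin rfl).symm ⟨i, h⟩

lemma sigE_rkE {i : Fin n} (h : i ∈ topT f) : sigE f (rkE f i h) = i := by
  have h2 := ((topT f).orderIsoOfFin rfl).apply_symm_apply ⟨i, h⟩
  rw [rkE]
  exact (Finset.coe_orderIsoOfFin_apply (topT f) rfl _).symm.trans (congrArg Subtype.val h2)

lemma rkE_sigE (r : Fin (kk f)) : rkE f (sigE f r) (sigE_mem f r) = r := by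
  rw [rkE]
  have : (⟨sigE f r, sigE_mem f r⟩ : {x // x ∈ topT f}) = (topT f).orderIsoOfFin rfl r :=
    Subtype.ext (Finset.coe_orderIsoOfFin_apply _ _ _).symm
  rw [this]
  exact OrderIso.symm_apply_apply _ _

variable {f}
variable (hinv : Function.Involutive f)

/-- Enumeration of bottom through strands. -/
noncomputable def tauE : Fin (kk f) ↪o Fin m := (botT f).orderEmbOfFin (card_botT hinv)

lemma tauE_mem (r : Fin (kk f)) : tauE hinv r ∈ botT f :=
  Finset.orderEmbOfFin_mem _ _ _

/-- Rank of a bottom through strand. -/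
noncomputable def rkB (j : Fin m) (h : j ∈ botT f) : Fin (kk f) :=
  ((botT f).orderIsoOfFin (card_botT hinv)).symm ⟨j, h⟩

lemma tauE_rkB {j : Fin m} (h : j ∈ botT f) : tauE hinv (rkB hinv j h) = j := by
  have h2 := ((botT f).orderIsoOfFin (card_botT hinv)).apply_symm_apply ⟨j, h⟩
  rw [rkB]
  exact (Finset.coe_orderIsoOfFin_apply (botT f) (card_botT hinv) _).symm.trans
    (congrArg Subtype.val h2)

lemma rkB_tauE (r : Fin (kk f)) : rkB hinv (tauE hinv r) (tauE_mem hinv r) = r := by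
  rw [rkB]
  have : (⟨tauE hinv r, tauE_mem hinv r⟩ : {x // x ∈ botT f})
      = (botT f).orderIsoOfFin (card_botT hinv) r :=
    Subtype.ext (Finset.coe_orderIsoOfFin_apply _ _ _).symm
  rw [this]
  exact OrderIso.symm_apply_apply _ _

/-- The key matching lemma: `f` sends the `r`-th top through strand to the
`r`-th bottom through strand. -/
lemma f_sigE (hf : Planar f) (r : Fin (kk f)) :
    f (Sum.inl (sigE f r)) = Sum.inr (tauE hf.1.1 r) := by
  have hexg : ∀ s : Fin (kk f), ∃ c, f (Sum.inl (sigE f s)) = Sum.inr c := fun s =>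
    (mem_topT f).mp (sigE_mem f s)
  choose g hg using hexg
  have hgmem : ∀ s, g s ∈ botT f := by
    intro s
    rw [mem_botT]
    refine ⟨sigE f s, ?_⟩
    rw [← hg s, hf.1.1]
  have hgmono : StrictMono g := by
    intro s t hst
    have h1 : Incomp (f (Sum.inl (sigE f s))) (Sum.inl (sigE f s)) := by
      rw [hg]; exact ⟨Sum.not_inr_le_inl, Sum.not_inl_le_inr⟩
    have h2 : Incomp (Sum.inl (sigE f t) : Fin n ⊕ Fin m) (f (Sum.inl (sigE f t))) := by
      rw [hg]; exact ⟨Sum.not_inl_le_inr, Sum.not_inr_le_inl⟩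
    have hlt : (Sum.inl (sigE f s) : Fin n ⊕ Fin m) < Sum.inl (sigE f t) :=
      Sum.inl_lt_inl_iff.mpr ((sigE f).strictMono hst)
    have := hf.2.2 _ _ h1 hlt h2
    rw [hg, hg] at this
    exact Sum.inr_lt_inr_iff.mp this
  have hgeq : g = (botT f).orderEmbOfFin (card_botT hf.1.1) :=
    Finset.orderEmbOfFin_unique _ hgmem hgmono
  rw [hg r, hgeq]
  rfl

lemma f_tauE (hf : Planar f) (r : Fin (kk f)) :
    f (Sum.inr (tauE hf.1.1 r)) = Sum.inl (sigE f r) := by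
  rw [← f_sigE hf r, hf.1.1]

end Construction

end TLAux
namespace TLAux

open Sum Relation

section Maps

variable {n m : ℕ} {f : Fin n ⊕ Fin m → Fin n ⊕ Fin m}

/-- The epic part of the factorization. -/
noncomputable def eMap (f : Fin n ⊕ Fin m → Fin n ⊕ Fin m) :
    Fin n ⊕ Fin (kk f) → Fin n ⊕ Fin (kk f) := fun x =>
  match x with
  | Sum.inl i =>
    if h : i ∈ topT f then Sum.inr (rkE f i h)
    else Sum.inl ((f (Sum.inl i)).getLeft (by
      rw [Sum.isLeft_iff]; exact (not_mem_topT f).mp h))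
  | Sum.inr r => Sum.inl (sigE f r)

/-- The monic part of the factorization. -/
noncomputable def mMap (hinv : Function.Involutive f) :
    Fin (kk f) ⊕ Fin m → Fin (kk f) ⊕ Fin m := fun x =>
  match x with
  | Sum.inl r => Sum.inr (tauE hinv r)
  | Sum.inr j =>
    if h : j ∈ botT f then Sum.inl (rkB hinv j h)
    else Sum.inr ((f (Sum.inr j)).getRight (by
      rw [Sum.isRight_iff]; exact (not_mem_botT f).mp h))

lemma eMap_inr (r : Fin (kk f)) : eMap f (Sum.inr r) = Sum.inl (sigE f r) := rfl

lemma eMap_inl_mem {i : Fin n} (h : i ∈ topT f) :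
    eMap f (Sum.inl i) = Sum.inr (rkE f i h) := by
  simp [eMap, h]

lemma eMap_inl_cup {i j : Fin n} (h : f (Sum.inl i) = Sum.inl j) :
    eMap f (Sum.inl i) = Sum.inl j := by
  have hni : i ∉ topT f := by
    rw [mem_topT]
    simp [h]
  simp only [eMap, dif_neg hni]
  congr 1
  rw [Sum.getLeft_eq_iff]
  exact h

lemma mMap_inl (hinv : Function.Involutive f) (r : Fin (kk f)) :
    mMap hinv (Sum.inl r) = Sum.inr (tauE hinv r) := rfl

lemma mMap_inr_mem (hinv : Function.Involutive f) {j : Fin m} (h : j ∈ botT f) :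
    mMap hinv (Sum.inr j) = Sum.inl (rkB hinv j h) := by
  simp [mMap, h]

lemma mMap_inr_cap (hinv : Function.Involutive f) {i j : Fin m}
    (h : f (Sum.inr i) = Sum.inr j) : mMap hinv (Sum.inr i) = Sum.inr j := by
  have hni : i ∉ botT f := by
    rw [mem_botT]
    simp [h]
  simp only [mMap, dif_neg hni]
  congr 1
  rw [Sum.getRight_eq_iff]
  exact h

lemma eMap_nocap : ¬ HasCap (eMap f) := by
  rintro ⟨i, j, h⟩
  rw [eMap_inr] at h
  simp at h

lemma mMap_nocup (hinv : Function.Involutive f) : ¬ HasCup (mMap hinv) := by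
  rintro ⟨i, j, h⟩
  rw [mMap_inl] at h
  simp at h

lemma eMap_invol (hf : FPF f) : Function.Involutive (eMap f) := by
  rintro (i | r)
  · by_cases h : i ∈ topT f
    · rw [eMap_inl_mem h, eMap_inr, sigE_rkE]
    · obtain ⟨j, hj⟩ := (not_mem_topT f).mp h
      have hji : f (Sum.inl j) = Sum.inl i := by rw [← hj, hf.1]
      rw [eMap_inl_cup hj, eMap_inl_cup hji]
  · rw [eMap_inr, eMap_inl_mem (sigE_mem f r), rkE_sigE]

lemma eMap_fpf (hf : FPF f) : FPF (eMap f) := by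
  refine ⟨eMap_invol hf, ?_⟩
  rintro (i | r)
  · by_cases h : i ∈ topT f
    · rw [eMap_inl_mem h]; simp
    · obtain ⟨j, hj⟩ := (not_mem_topT f).mp h
      rw [eMap_inl_cup hj]
      intro hij
      have hji : j = i := by simpa using hij
      exact hf.2 (Sum.inl i) (by rw [hj, hji])
  · rw [eMap_inr]; simp

lemma mMap_invol (hf : FPF f) : Function.Involutive (mMap hf.1) := by
  rintro (r | j)
  · rw [mMap_inl, mMap_inr_mem hf.1 (tauE_mem hf.1 r), rkB_tauE]
  · by_cases h : j ∈ botT f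
    · rw [mMap_inr_mem hf.1 h, mMap_inl, tauE_rkB]
    · obtain ⟨i, hi⟩ := (not_mem_botT f).mp h
      have hij : f (Sum.inr i) = Sum.inr j := by rw [← hi, hf.1]
      rw [mMap_inr_cap hf.1 hi, mMap_inr_cap hf.1 hij]

lemma mMap_fpf (hf : FPF f) : FPF (mMap hf.1) := by
  refine ⟨mMap_invol hf, ?_⟩
  rintro (r | j)
  · rw [mMap_inl]; simp
  · by_cases h : j ∈ botT f
    · rw [mMap_inr_mem hf.1 h]; simp
    · obtain ⟨i, hi⟩ := (not_mem_botT f).mp h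
      rw [mMap_inr_cap hf.1 hi]
      intro hij
      have hji : i = j := by simpa using hij
      exact hf.2 (Sum.inr j) (by rw [hi, hji])

end Maps

end TLAux
namespace TLAux

open Sum Relation

section Planarity

variable {n m : ℕ} {f : Fin n ⊕ Fin m → Fin n ⊕ Fin m}

lemma incomp_ll {α β : Type*} [LinearOrder α] [Preorder β] {a b : α} :
    ¬ Incomp (Sum.inl a : α ⊕ β) (Sum.inl b) := by
  rintro ⟨h1, h2⟩
  rcases le_total a b with h | h
  · exact h1 (Sum.inl_le_inl_iff.mpr h)
  · exact h2 (Sum.inl_le_inl_iff.mpr h)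

lemma incomp_rr {α β : Type*} [Preorder α] [LinearOrder β] {a b : β} :
    ¬ Incomp (Sum.inr a : α ⊕ β) (Sum.inr b) := by
  rintro ⟨h1, h2⟩
  rcases le_total a b with h | h
  · exact h1 (Sum.inr_le_inr_iff.mpr h)
  · exact h2 (Sum.inr_le_inr_iff.mpr h)

lemma eMap_pl1 (hf : Planar f) : PL1 (eMap f) := by
  rintro (a | r) (b | s) hab hb
  · -- inl a < inl b
    have hab' : a < b := Sum.inl_lt_inl_iff.mp hab
    by_cases h : a ∈ topT f
    · rw [eMap_inl_mem h] at hb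
      exact absurd hb Sum.not_inl_lt_inr
    · obtain ⟨c, hc⟩ := (not_mem_topT f).mp h
      rw [eMap_inl_cup hc] at hb ⊢
      have hb' : b < c := Sum.inl_lt_inl_iff.mp hb
      obtain ⟨h1, h2⟩ := hf.2.1 (Sum.inl a) (Sum.inl b)
        (Sum.inl_lt_inl_iff.mpr hab') (by rw [hc]; exact Sum.inl_lt_inl_iff.mpr hb')
      rcases hd : f (Sum.inl b) with d | d
      · rw [hd] at h1 h2
        rw [hc] at h2
        rw [eMap_inl_cup hd]
        exact ⟨Sum.inl_lt_inl_iff.mpr (Sum.inl_lt_inl_iff.mp h1),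
          Sum.inl_lt_inl_iff.mpr (Sum.inl_lt_inl_iff.mp h2)⟩
      · rw [hd] at h1
        exact absurd h1 Sum.not_inl_lt_inr
  · exact absurd hab Sum.not_inl_lt_inr
  · exact absurd hab Sum.not_inr_lt_inl
  · rw [eMap_inr] at hb
    exact absurd hb Sum.not_inr_lt_inl

lemma eMap_pl2 (hf : Planar f) : PL2 (eMap f) := by
  rintro (a | r) (b | s) h1 hab h2
  · have hab' : a < b := Sum.inl_lt_inl_iff.mp hab
    by_cases ha : a ∈ topT f
    · by_cases hbm : b ∈ topT f
      · rw [eMap_inl_mem ha, eMap_inl_mem hbm]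
        refine Sum.inr_lt_inr_iff.mpr ?_
        rw [rkE, rkE]
        exact ((topT f).orderIsoOfFin rfl).symm.lt_iff_lt.mpr (Subtype.mk_lt_mk.mpr hab')
      · obtain ⟨c, hc⟩ := (not_mem_topT f).mp hbm
        rw [eMap_inl_cup hc] at h2
        exact absurd h2 incomp_ll
    · obtain ⟨c, hc⟩ := (not_mem_topT f).mp ha
      rw [eMap_inl_cup hc] at h1
      exact absurd h1 incomp_ll
  · exact absurd hab Sum.not_inl_lt_inr
  · exact absurd hab Sum.not_inr_lt_inl
  · rw [eMap_inr, eMap_inr]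
    exact Sum.inl_lt_inl_iff.mpr ((sigE f).strictMono (Sum.inr_lt_inr_iff.mp hab))

lemma mMap_pl1 (hf : Planar f) : PL1 (mMap hf.1.1) := by
  rintro (r | a) (s | b) hab hb
  · rw [mMap_inl] at hb
    exact absurd hb Sum.not_inl_lt_inr
  · exact absurd hab Sum.not_inl_lt_inr
  · exact absurd hab Sum.not_inr_lt_inl
  · have hab' : a < b := Sum.inr_lt_inr_iff.mp hab
    by_cases h : a ∈ botT f
    · rw [mMap_inr_mem hf.1.1 h] at hb
      exact absurd hb Sum.not_inr_lt_inl
    · obtain ⟨c, hc⟩ := (not_mem_botT f).mp h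
      rw [mMap_inr_cap hf.1.1 hc] at hb ⊢
      have hb' : b < c := Sum.inr_lt_inr_iff.mp hb
      obtain ⟨h1, h2⟩ := hf.2.1 (Sum.inr a) (Sum.inr b)
        (Sum.inr_lt_inr_iff.mpr hab') (by rw [hc]; exact Sum.inr_lt_inr_iff.mpr hb')
      rcases hd : f (Sum.inr b) with d | d
      · rw [hd] at h1
        exact absurd h1 Sum.not_inr_lt_inl
      · rw [hd] at h1 h2
        rw [hc] at h2
        rw [mMap_inr_cap hf.1.1 hd]
        exact ⟨Sum.inr_lt_inr_iff.mpr (Sum.inr_lt_inr_iff.mp h1),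
          Sum.inr_lt_inr_iff.mpr (Sum.inr_lt_inr_iff.mp h2)⟩

lemma mMap_pl2 (hf : Planar f) : PL2 (mMap hf.1.1) := by
  rintro (r | a) (s | b) h1 hab h2
  · rw [mMap_inl, mMap_inl]
    exact Sum.inr_lt_inr_iff.mpr ((tauE hf.1.1).strictMono (Sum.inl_lt_inl_iff.mp hab))
  · exact absurd hab Sum.not_inl_lt_inr
  · exact absurd hab Sum.not_inr_lt_inl
  · have hab' : a < b := Sum.inr_lt_inr_iff.mp hab
    by_cases ha : a ∈ botT f
    · by_cases hbm : b ∈ botT f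
      · rw [mMap_inr_mem hf.1.1 ha, mMap_inr_mem hf.1.1 hbm]
        refine Sum.inl_lt_inl_iff.mpr ?_
        rw [rkB, rkB]
        exact ((botT f).orderIsoOfFin (card_botT hf.1.1)).symm.lt_iff_lt.mpr
          (Subtype.mk_lt_mk.mpr hab')
      · obtain ⟨c, hc⟩ := (not_mem_botT f).mp hbm
        rw [mMap_inr_cap hf.1.1 hc] at h2
        exact absurd h2 incomp_rr
    · obtain ⟨c, hc⟩ := (not_mem_botT f).mp ha
      rw [mMap_inr_cap hf.1.1 hc] at h1
      exact absurd h1 incomp_rr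

end Planarity

end TLAux
namespace TLAux

open Sum Relation

section CompSpec

variable {n m : ℕ} {f : Fin n ⊕ Fin m → Fin n ⊕ Fin m}

lemma exec_em_spec (hf : Planar f) :
    ∀ (x : Fin n ⊕ Fin m) (y : Fin n ⊕ Fin m),
      ExecR (graphRel (eMap f)) (graphRel (mMap hf.1.1)) x y ↔ f x = y := by
  have hRbb : ∀ a b : Fin (kk f), ¬ graphRel (eMap f) (Sum.inr a) (Sum.inr b) := by
    intro a b hab
    rw [graphRel, eMap_inr] at hab
    exact absurd hab (by simp)
  have hSbb : ∀ a b : Fin (kk f), ¬ graphRel (mMap hf.1.1) (Sum.inl a) (Sum.inl b) := by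
    intro a b hab
    rw [graphRel, mMap_inl] at hab
    exact absurd hab (by simp)
  have hRS : ∀ (a b : Fin (kk f)),
      ¬ Relation.Comp (fun a b => graphRel (eMap f) (Sum.inr a) (Sum.inr b))
        (fun a b => graphRel (mMap hf.1.1) (Sum.inl a) (Sum.inl b)) a b := by
    rintro a b ⟨c, hc, -⟩
    exact hRbb a c hc
  have hSR : ∀ (a b : Fin (kk f)),
      ¬ Relation.Comp (fun a b => graphRel (mMap hf.1.1) (Sum.inl a) (Sum.inl b))
        (fun a b => graphRel (eMap f) (Sum.inr a) (Sum.inr b)) a b := by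
    rintro a b ⟨c, hc, -⟩
    exact hSbb a c hc
  rintro (i | c) y
  · cases y with
    | inl j =>
      rw [execR_ll]
      have hleft : eMap f (Sum.inl i) = Sum.inl j ↔ f (Sum.inl i) = Sum.inl j := by
        by_cases h : i ∈ topT f
        · obtain ⟨c, hc⟩ := (mem_topT f).mp h
          rw [eMap_inl_mem h, hc]
          simp
        · obtain ⟨c, hc⟩ := (not_mem_topT f).mp h
          rw [eMap_inl_cup hc, hc]
          simp
      constructor
      · rintro (hj | ⟨b₀, -, x₀, hx₀, -⟩)
        · exact hleft.mp hj
        · exact absurd hx₀ (hSbb _ _)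
      · intro hj
        exact Or.inl (hleft.mpr hj)
    | inr c =>
      rw [execR_lr]
      by_cases h : i ∈ topT f
      · constructor
        · rintro ⟨b₀, hb₀, z, hz, hzc⟩
          rw [graphRel, eMap_inl_mem h] at hb₀
          obtain rfl : rkE f i h = b₀ := by simpa using hb₀
          obtain rfl : rkE f i h = z := rtg_empty (fun a b hab => hSR a b
            (by obtain ⟨w, h1, h2⟩ := hab; exact ⟨w, h1, h2⟩)) hz
          rw [graphRel, mMap_inl] at hzc
          obtain rfl : tauE hf.1.1 (rkE f i h) = c := by simpa using hzc
          conv_lhs => rw [← sigE_rkE f h]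
          rw [f_sigE hf]
        · intro hc
          refine ⟨rkE f i h, ?_, rkE f i h, Relation.ReflTransGen.refl, ?_⟩
          · show eMap f (Sum.inl i) = _
            rw [eMap_inl_mem h]
          · show mMap hf.1.1 (Sum.inl (rkE f i h)) = Sum.inr c
            rw [mMap_inl]
            congr 1
            have := f_sigE hf (rkE f i h)
            rw [sigE_rkE f h, hc] at this
            exact (by simpa using this : c = _).symm
      · obtain ⟨d, hd⟩ := (not_mem_topT f).mp h
        constructor
        · rintro ⟨b₀, hb₀, -⟩
          rw [graphRel, eMap_inl_cup hd] at hb₀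
          simp at hb₀
        · intro hc
          rw [hd] at hc
          simp at hc
  · cases y with
    | inl j =>
      rw [execR_rl]
      by_cases h : c ∈ botT f
      · constructor
        · rintro ⟨b₀, hb₀, z, hz, hzj⟩
          rw [graphRel, mMap_inr_mem hf.1.1 h] at hb₀
          obtain rfl : rkB hf.1.1 c h = b₀ := by simpa using hb₀
          obtain rfl : rkB hf.1.1 c h = z := rtg_empty (fun a b hab => hRS a b
            (by obtain ⟨w, h1, h2⟩ := hab; exact ⟨w, h1, h2⟩)) hz
          rw [graphRel, eMap_inr] at hzj
          obtain rfl : sigE f (rkB hf.1.1 c h) = j := by simpa using hzj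
          conv_lhs => rw [← tauE_rkB hf.1.1 h]
          rw [f_tauE hf]
        · intro hj
          refine ⟨rkB hf.1.1 c h, ?_, rkB hf.1.1 c h, Relation.ReflTransGen.refl, ?_⟩
          · show mMap hf.1.1 (Sum.inr c) = _
            rw [mMap_inr_mem hf.1.1 h]
          · show eMap f (Sum.inr (rkB hf.1.1 c h)) = Sum.inl j
            rw [eMap_inr]
            congr 1
            have := f_tauE hf (rkB hf.1.1 c h)
            rw [tauE_rkB hf.1.1 h, hj] at this
            exact (by simpa using this : j = _).symm
      · obtain ⟨d, hd⟩ := (not_mem_botT f).mp h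
        constructor
        · rintro ⟨b₀, hb₀, -⟩
          rw [graphRel, mMap_inr_cap hf.1.1 hd] at hb₀
          simp at hb₀
        · intro hj
          rw [hd] at hj
          simp at hj
    | inr d =>
      rw [execR_rr]
      have hright : mMap hf.1.1 (Sum.inr c) = Sum.inr d ↔ f (Sum.inr c) = Sum.inr d := by
        by_cases h : c ∈ botT f
        · obtain ⟨e, he⟩ := (mem_botT f).mp h
          rw [mMap_inr_mem hf.1.1 h, he]
          simp
        · obtain ⟨e, he⟩ := (not_mem_botT f).mp h
          rw [mMap_inr_cap hf.1.1 he, he]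
          simp
      constructor
      · rintro (hd | ⟨b₀, -, x₀, hx₀, -⟩)
        · exact hright.mp hd
        · exact absurd hx₀ (hRbb _ _)
      · intro hd
        exact Or.inl (hright.mpr hd)

lemma execFun_em (hf : Planar f) : execFun (eMap f) (mMap hf.1.1) = f := by
  funext x
  exact execFun_eq_of_spec (fun z => by rw [exec_em_spec hf x z, eq_comm])

lemma Z_em (hf : Planar f) : Z (eMap f) (mMap hf.1.1) = 0 := by
  apply Z_eq_zero
  rintro i j ⟨x, hx, -⟩
  rw [eMap_inr] at hx
  simp at hx

end CompSpec

end TLAux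
namespace TLAux

open Sum Relation

section Counting

variable {n m : ℕ} {f : Fin n ⊕ Fin m → Fin n ⊕ Fin m}

lemma count_top (hinv : Function.Involutive f) (hfpf : ∀ x, f x ≠ x) :
    n = kk f + 2 * numCups f := by
  classical
  set C1 : Finset (Fin n) :=
    Finset.univ.filter (fun i => ∃ j, i < j ∧ f (Sum.inl i) = Sum.inl j) with hC1def
  set C2 : Finset (Fin n) :=
    Finset.univ.filter (fun i => ∃ j, j < i ∧ f (Sum.inl i) = Sum.inl j) with hC2def
  have hcups : numCups f = C1.card := by
    rw [numCups]
    have : {i : Fin n | ∃ j, i < j ∧ f (Sum.inl i) = Sum.inl j} = ↑C1 := by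
      ext x; simp [hC1def]
    rw [this, Set.ncard_coe_finset]
  have hC12 : C1.card = C2.card := by
    apply Finset.card_bij (fun a ha => (f (Sum.inl a)).getLeft (by
      rw [Sum.isLeft_iff]
      obtain ⟨j, -, hj⟩ := Finset.mem_filter.mp ha |>.2
      exact ⟨j, hj⟩))
    · intro a ha
      obtain ⟨j, hja, hj⟩ := (Finset.mem_filter.mp ha).2
      have hgl : (f (Sum.inl a)).getLeft (by rw [Sum.isLeft_iff]; exact ⟨j, hj⟩) = j := by simp [hj]
      rw [hgl]
      refine Finset.mem_filter.mpr ⟨Finset.mem_univ _, a, hja, ?_⟩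
      rw [← hj, hinv]
    · intro a ha b hb hab
      have : f (Sum.inl a) = f (Sum.inl b) := by
        rw [← Sum.inl_getLeft (f (Sum.inl a)), ← Sum.inl_getLeft (f (Sum.inl b)), hab]
        obtain ⟨j, -, hj⟩ := (Finset.mem_filter.mp ha).2
        simp [hj]
      simpa using hinv.injective this
    · intro b hb
      obtain ⟨j, hjb, hj⟩ := (Finset.mem_filter.mp hb).2
      have hjmem : j ∈ C1 := by
        refine Finset.mem_filter.mpr ⟨Finset.mem_univ _, b, hjb, ?_⟩
        rw [← hj, hinv]
      refine ⟨j, hjmem, ?_⟩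
      have : f (Sum.inl j) = Sum.inl b := by rw [← hj, hinv]
      simp [this]
  have hdisj : Disjoint C1 C2 := by
    rw [Finset.disjoint_left]
    intro a ha ha2
    obtain ⟨j, hja, hj⟩ := (Finset.mem_filter.mp ha).2
    obtain ⟨j', hj'a, hj'⟩ := (Finset.mem_filter.mp ha2).2
    rw [hj] at hj'
    obtain rfl : j = j' := by simpa using hj'
    exact absurd hja (not_lt.mpr (le_of_lt hj'a))
  have hunion : Finset.univ.filter (fun i => ¬ (f (Sum.inl i)).isRight) = C1 ∪ C2 := by
    ext a
    simp only [Finset.mem_filter, Finset.mem_union, Finset.mem_univ, true_and, hC1def, hC2def]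
    constructor
    · intro hL
      have : (f (Sum.inl a)).isLeft := Sum.not_isRight.mp hL
      obtain ⟨j, hj⟩ := Sum.isLeft_iff.mp this
      have hne : j ≠ a := by
        intro hja
        exact hfpf (Sum.inl a) (by rw [hj, hja])
      rcases lt_or_gt_of_ne hne with h | h
      · exact Or.inr ⟨j, h, hj⟩
      · exact Or.inl ⟨j, h, hj⟩
    · rintro (⟨j, -, hj⟩ | ⟨j, -, hj⟩) <;> simp [hj]
  have hsplit := Finset.card_filter_add_card_filter_not
    (s := (Finset.univ : Finset (Fin n))) (p := fun i => (f (Sum.inl i)).isRight)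
  rw [hunion, Finset.card_union_of_disjoint hdisj] at hsplit
  have : (Finset.univ : Finset (Fin n)).card = n := by simp
  rw [this] at hsplit
  rw [hcups]
  have hkk : (Finset.univ.filter (fun i => (f (Sum.inl i)).isRight)).card = kk f := rfl
  omega

lemma count_bot (hinv : Function.Involutive f) (hfpf : ∀ x, f x ≠ x) :
    m = kk f + 2 * numCaps f := by
  classical
  set C1 : Finset (Fin m) :=
    Finset.univ.filter (fun i => ∃ j, i < j ∧ f (Sum.inr i) = Sum.inr j) with hC1def
  set C2 : Finset (Fin m) :=
    Finset.univ.filter (fun i => ∃ j, j < i ∧ f (Sum.inr i) = Sum.inr j) with hC2def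
  have hcaps : numCaps f = C1.card := by
    rw [numCaps]
    have : {i : Fin m | ∃ j, i < j ∧ f (Sum.inr i) = Sum.inr j} = ↑C1 := by
      ext x; simp [hC1def]
    rw [this, Set.ncard_coe_finset]
  have hC12 : C1.card = C2.card := by
    apply Finset.card_bij (fun a ha => (f (Sum.inr a)).getRight (by
      rw [Sum.isRight_iff]
      obtain ⟨j, -, hj⟩ := Finset.mem_filter.mp ha |>.2
      exact ⟨j, hj⟩))
    · intro a ha
      obtain ⟨j, hja, hj⟩ := (Finset.mem_filter.mp ha).2
      have hgl : (f (Sum.inr a)).getRight (by rw [Sum.isRight_iff]; exact ⟨j, hj⟩) = j := by simp [hj]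
      rw [hgl]
      refine Finset.mem_filter.mpr ⟨Finset.mem_univ _, a, hja, ?_⟩
      rw [← hj, hinv]
    · intro a ha b hb hab
      have : f (Sum.inr a) = f (Sum.inr b) := by
        rw [← Sum.inr_getRight (f (Sum.inr a)), ← Sum.inr_getRight (f (Sum.inr b)), hab]
        obtain ⟨j, -, hj⟩ := (Finset.mem_filter.mp ha).2
        simp [hj]
      simpa using hinv.injective this
    · intro b hb
      obtain ⟨j, hjb, hj⟩ := (Finset.mem_filter.mp hb).2
      have hjmem : j ∈ C1 := by
        refine Finset.mem_filter.mpr ⟨Finset.mem_univ _, b, hjb, ?_⟩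
        rw [← hj, hinv]
      refine ⟨j, hjmem, ?_⟩
      have : f (Sum.inr j) = Sum.inr b := by rw [← hj, hinv]
      simp [this]
  have hdisj : Disjoint C1 C2 := by
    rw [Finset.disjoint_left]
    intro a ha ha2
    obtain ⟨j, hja, hj⟩ := (Finset.mem_filter.mp ha).2
    obtain ⟨j', hj'a, hj'⟩ := (Finset.mem_filter.mp ha2).2
    rw [hj] at hj'
    obtain rfl : j = j' := by simpa using hj'
    exact absurd hja (not_lt.mpr (le_of_lt hj'a))
  have hunion : Finset.univ.filter (fun i => ¬ (f (Sum.inr i)).isLeft) = C1 ∪ C2 := by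
    ext a
    simp only [Finset.mem_filter, Finset.mem_union, Finset.mem_univ, true_and, hC1def, hC2def]
    constructor
    · intro hL
      have : (f (Sum.inr a)).isRight := Sum.not_isLeft.mp hL
      obtain ⟨j, hj⟩ := Sum.isRight_iff.mp this
      have hne : j ≠ a := by
        intro hja
        exact hfpf (Sum.inr a) (by rw [hj, hja])
      rcases lt_or_gt_of_ne hne with h | h
      · exact Or.inr ⟨j, h, hj⟩
      · exact Or.inl ⟨j, h, hj⟩
    · rintro (⟨j, -, hj⟩ | ⟨j, -, hj⟩) <;> simp [hj]
  have hsplit := Finset.card_filter_add_card_filter_not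
    (s := (Finset.univ : Finset (Fin m))) (p := fun i => (f (Sum.inr i)).isLeft)
  rw [hunion, Finset.card_union_of_disjoint hdisj] at hsplit
  have huniv : (Finset.univ : Finset (Fin m)).card = m := by simp
  rw [huniv] at hsplit
  rw [hcaps]
  have hbot : (Finset.univ.filter (fun i => (f (Sum.inr i)).isLeft)).card = kk f :=
    card_botT hinv
  omega

end Counting

end TLAux


/-- Every morphism `f : n → m` of `D` factors as `f = m' ∘ e` with
`e : n → k` epic (cap-free) and `m' : k → m` monic (cup-free), where
`k = n − 2p = m − 2q` for `p` the number of cups and `q` the number of caps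
of `f`. -/
theorem stmt_15 (n m : ℕ) (F : TLHom n m) (hF : Planar F.2) :
    ∃ (k : ℕ) (E : TLHom n k) (M : TLHom k m),
      Planar E.2 ∧ Planar M.2 ∧
      Epic E ∧ ¬ HasCap E.2 ∧ Monic M ∧ ¬ HasCup M.2 ∧
      TLcomp E M = F ∧
      n = k + 2 * numCups F.2 ∧ m = k + 2 * numCaps F.2 := by
  refine ⟨TLAux.kk F.2, (F.1, TLAux.eMap F.2), (0, TLAux.mMap hF.1.1),
    ⟨TLAux.eMap_fpf hF.1, TLAux.eMap_pl1 hF, TLAux.eMap_pl2 hF⟩,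
    ⟨TLAux.mMap_fpf hF.1, TLAux.mMap_pl1 hF, TLAux.mMap_pl2 hF⟩,
    TLAux.epic_of_nocap F.1 _ (TLAux.eMap_invol hF.1) TLAux.eMap_nocap,
    TLAux.eMap_nocap,
    TLAux.monic_of_nocup 0 _ (TLAux.mMap_invol hF.1) (TLAux.mMap_nocup hF.1.1),
    TLAux.mMap_nocup hF.1.1,
    ?_,
    TLAux.count_top hF.1.1 hF.1.2,
    TLAux.count_bot hF.1.1 hF.1.2⟩
  have h1 : TLcomp (F.1, TLAux.eMap F.2) (0, TLAux.mMap hF.1.1) =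
      (F.1, F.2) := by
    refine Prod.ext ?_ ?_
    · show F.1 + 0 + Z (TLAux.eMap F.2) (TLAux.mMap hF.1.1) = F.1
      rw [TLAux.Z_em hF]
      omega
    · exact TLAux.execFun_em hF
  rw [h1]
  rfl
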